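/- Limits of the bias factor of the Marchenko-Pastur integral: for fixed ξ₀ > 0 let ξ(α) = ξ₀/α and χ_B(α) = ∫ (1 + ξ(α) t)^{-2} dμ_α(t). Then χ_B(α) → 1 as α → ∞ and χ_B(α) → 0 as α → 0⁺. -/

import Mathlib

open MeasureTheory Real Filter

/-- The Marchenko–Pastur distribution with ratio parameter `α`:
`μ_α = max(0, 1−1/α) δ₀ + (√((α₊−t)(t−α₋))/(2παt)) 1_{[α₋,α₊]}(t) dt`, `α_± = (1±√α)²`. -/
noncomputable def mpMeasure (α : ℝ) : Measure ℝ :=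
  ENNReal.ofReal (max 0 (1 - 1 / α)) • Measure.dirac 0 +
    volume.withDensity fun t => ENNReal.ofReal
      ((Set.Icc ((1 - Real.sqrt α) ^ 2) ((1 + Real.sqrt α) ^ 2)).indicator
        (fun s => Real.sqrt (((1 + Real.sqrt α) ^ 2 - s) * (s - (1 - Real.sqrt α) ^ 2)) /
          (2 * π * α * s)) t)

namespace MPAux

open scoped ENNReal NNReal

/-- The real-valued density of the absolutely continuous part. -/
noncomputable def den (α t : ℝ) : ℝ :=
  (Set.Icc ((1 - Real.sqrt α) ^ 2) ((1 + Real.sqrt α) ^ 2)).indicator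
    (fun s => Real.sqrt (((1 + Real.sqrt α) ^ 2 - s) * (s - (1 - Real.sqrt α) ^ 2)) /
      (2 * π * α * s)) t

lemma den_meas (α : ℝ) : Measurable (den α) :=
  Measurable.indicator (by fun_prop) measurableSet_Icc

lemma den_nonneg (α : ℝ) (hα : 0 < α) (t : ℝ) : 0 ≤ den α t := by
  unfold den
  apply Set.indicator_nonneg
  intro x hx
  apply div_nonneg (Real.sqrt_nonneg _)
  have hx0 : 0 ≤ x := le_trans (sq_nonneg _) hx.1
  have : (0:ℝ) ≤ 2 * π * α := by positivity
  exact mul_nonneg this hx0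

lemma den_le {α t : ℝ} (hα : 0 < α)
    (ht : t ∈ Set.Icc ((1 - Real.sqrt α) ^ 2) ((1 + Real.sqrt α) ^ 2))
    (ha : 0 < (1 - Real.sqrt α) ^ 2) :
    den α t ≤ 2 * Real.sqrt α / (2 * π * α * (1 - Real.sqrt α) ^ 2) := by
  set s := Real.sqrt α with hs
  have hs0 : 0 ≤ s := Real.sqrt_nonneg _
  have hnum : Real.sqrt (((1 + s) ^ 2 - t) * (t - (1 - s) ^ 2)) ≤ 2 * s := by
    have h1 : ((1 + s) ^ 2 - t) * (t - (1 - s) ^ 2) ≤ (2 * s) ^ 2 := by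
      obtain ⟨h2, h3⟩ := ht; nlinarith [sq_nonneg ((1 + s) ^ 2 - t - (t - (1 - s) ^ 2))]
    calc Real.sqrt (((1 + s) ^ 2 - t) * (t - (1 - s) ^ 2)) ≤ Real.sqrt ((2 * s) ^ 2) :=
        Real.sqrt_le_sqrt h1
      _ = 2 * s := by rw [Real.sqrt_sq (by positivity)]
  have hden : 0 < 2 * π * α * (1 - s) ^ 2 := by positivity
  have hden2 : 2 * π * α * (1 - s) ^ 2 ≤ 2 * π * α * t := by
    have := ht.1; nlinarith [pi_pos]
  rw [den, Set.indicator_of_mem ht]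
  exact div_le_div₀ (by positivity) hnum hden hden2

/-- Sandwich for the bias integral. -/
lemma sandwich (α c : ℝ) (hα : 0 < α) (hc : 0 ≤ c) (ha : 0 < (1 - Real.sqrt α) ^ 2) :
    max 0 (1 - 1 / α) ≤ ∫ t, ((1 + c * t) ^ 2)⁻¹ ∂(mpMeasure α) ∧
    ∫ t, ((1 + c * t) ^ 2)⁻¹ ∂(mpMeasure α) ≤ max 0 (1 - 1 / α) +
      4 / (π * (1 - Real.sqrt α) ^ 2) * (((1 + c * (1 - Real.sqrt α) ^ 2) ^ 2)⁻¹) := by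
  set s := Real.sqrt α with hs
  have hs0 : 0 ≤ s := Real.sqrt_nonneg _
  have hss : s * s = α := Real.mul_self_sqrt hα.le
  set a : ℝ := (1 - s) ^ 2 with hadef
  set b : ℝ := (1 + s) ^ 2 with hbdef
  set φ : ℝ → ℝ := fun t => ((1 + c * t) ^ 2)⁻¹ with hφ
  have hφmeas : Measurable φ := by fun_prop
  have hφ0 : φ 0 = 1 := by simp [hφ]
  have hφnonneg : ∀ t, 0 ≤ φ t := fun t => by positivity
  have hφa_pos : 0 < 1 + c * a := by positivity
  have hφle : ∀ t, a ≤ t → φ t ≤ ((1 + c * a) ^ 2)⁻¹ := by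
    intro t hta
    apply inv_anti₀ (by positivity)
    have : 1 + c * a ≤ 1 + c * t := by nlinarith
    nlinarith
  set K : ℝ := 2 * s / (2 * π * α * a) * ((1 + c * a) ^ 2)⁻¹ with hK
  have hKnonneg : 0 ≤ K := by positivity
  -- pointwise bound
  have hbound : ∀ t, ‖den α t * φ t‖ ≤ (Set.Icc a b).indicator (fun _ => K) t := by
    intro t
    by_cases ht : t ∈ Set.Icc a b
    · rw [Set.indicator_of_mem ht, Real.norm_eq_abs,
        abs_of_nonneg (mul_nonneg (den_nonneg α hα t) (hφnonneg t))]
      exact mul_le_mul (den_le hα ht ha) (hφle t ht.1) (hφnonneg t) (by positivity)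
    · rw [Set.indicator_of_notMem ht]
      have : den α t = 0 := Set.indicator_of_notMem ht _
      simp [this]
  have hGφmeas : Measurable fun t => den α t * φ t := (den_meas α).mul hφmeas
  have hind : Integrable ((Set.Icc a b).indicator fun _ => K) volume := by
    rw [integrable_indicator_iff measurableSet_Icc]
    exact integrableOn_const measure_Icc_lt_top.ne
  have hGφint : Integrable (fun t => den α t * φ t) volume :=
    Integrable.mono' hind hGφmeas.aestronglyMeasurable (Filter.Eventually.of_forall hbound)
  -- rewrite the measure
  have hmeas_nn : Measurable fun t => (den α t).toNNReal := (den_meas α).real_toNNReal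
  have hsmul_eq : ∀ t, ((den α t).toNNReal : ℝ) • φ t = den α t * φ t := by
    intro t
    rw [smul_eq_mul, Real.coe_toNNReal _ (den_nonneg α hα t)]
  have hmp : mpMeasure α = ENNReal.ofReal (max 0 (1 - 1 / α)) • Measure.dirac 0 +
      volume.withDensity fun t => ((den α t).toNNReal : ℝ≥0∞) := rfl
  -- integrability wrt the two parts
  have h1 : Integrable φ (ENNReal.ofReal (max 0 (1 - 1 / α)) • Measure.dirac 0) := by
    apply Integrable.smul_measure _ ENNReal.ofReal_ne_top
    exact ⟨hφmeas.aestronglyMeasurable, by simp [HasFiniteIntegral, lintegral_dirac]⟩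
  have h2 : Integrable φ (volume.withDensity fun t => ((den α t).toNNReal : ℝ≥0∞)) := by
    rw [integrable_withDensity_iff_integrable_smul hmeas_nn]
    refine hGφint.congr (Filter.Eventually.of_forall fun t => ?_)
    exact (hsmul_eq t).symm
  -- compute the integral
  have hint : ∫ t, φ t ∂(mpMeasure α) = max 0 (1 - 1 / α) + ∫ t, den α t * φ t := by
    rw [hmp, integral_add_measure h1 h2, integral_smul_measure, integral_dirac, hφ0,
      integral_withDensity_eq_integral_smul hmeas_nn]
    congr 1
    · rw [ENNReal.toReal_ofReal (le_max_left _ _), smul_eq_mul, mul_one]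
    · exact integral_congr_ae (Filter.Eventually.of_forall hsmul_eq)
  constructor
  · rw [hint]
    have : 0 ≤ ∫ t, den α t * φ t :=
      integral_nonneg fun t => mul_nonneg (den_nonneg α hα t) (hφnonneg t)
    linarith
  · rw [hint]
    have hle : ∫ t, den α t * φ t ≤ ∫ t, (Set.Icc a b).indicator (fun _ => K) t := by
      apply integral_mono hGφint hind
      intro t
      have := hbound t
      rwa [Real.norm_eq_abs, abs_of_nonneg (mul_nonneg (den_nonneg α hα t) (hφnonneg t))] at this
    have hcomp : ∫ t, (Set.Icc a b).indicator (fun _ => K) t = K * (b - a) := by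
      rw [integral_indicator measurableSet_Icc, setIntegral_const, measureReal_def, Real.volume_Icc,
        ENNReal.toReal_ofReal (show (0:ℝ) ≤ b - a by nlinarith)]
      rw [smul_eq_mul, mul_comm]
    have hfinal : K * (b - a) = 4 / (π * a) * ((1 + c * a) ^ 2)⁻¹ := by
      have hba : b - a = 4 * s := by rw [hadef, hbdef]; ring
      rw [hK, hba]
      have hπ : (0:ℝ) < π := pi_pos
      have hspos : 0 < s := Real.sqrt_pos.2 hα
      rw [← hss]
      field_simp
    rw [hcomp] at hle
    rw [hfinal] at hle
    linarith

end MPAux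

open MPAux in
/-- Limits of the bias factor `χ_B(α) = ∫ (1 + (ξ₀/α) t)^{-2} dμ_α(t)`:
`χ_B(α) → 1` as `α → ∞` and `χ_B(α) → 0` as `α → 0⁺`. -/
theorem mp_bias_factor_limits (ξ₀ : ℝ) (hξ₀ : 0 < ξ₀) :
    Tendsto (fun α : ℝ => ∫ t, ((1 + (ξ₀ / α) * t) ^ 2)⁻¹ ∂(mpMeasure α)) atTop (nhds 1) ∧
    Tendsto (fun α : ℝ => ∫ t, ((1 + (ξ₀ / α) * t) ^ 2)⁻¹ ∂(mpMeasure α))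
      (nhdsWithin 0 (Set.Ioi 0)) (nhds 0) := by
  constructor
  · -- α → ∞
    have hinv : Tendsto (fun α : ℝ => 1 / α) atTop (nhds 0) := by
      simpa [one_div] using (tendsto_inv_atTop_zero : Tendsto (fun r : ℝ => r⁻¹) atTop (nhds 0))
    have hlow : Tendsto (fun α : ℝ => 1 - 1 / α) atTop (nhds 1) := by
      simpa using tendsto_const_nhds.sub hinv
    have hup : Tendsto (fun α : ℝ => 1 - 1 / α + 16 / π * (1 / α)) atTop (nhds 1) := by
      have := hlow.add ((tendsto_const_nhds (x := (16 / π : ℝ))).mul hinv)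
      simpa using this
    apply tendsto_of_tendsto_of_tendsto_of_le_of_le' hlow hup
    · filter_upwards [eventually_ge_atTop (4 : ℝ)] with α hα4
      have hα : (0:ℝ) < α := by linarith
      have hs2 : (2:ℝ) ≤ Real.sqrt α := by
        rw [show (2:ℝ) = Real.sqrt 4 by
          rw [show (4:ℝ) = 2^2 by norm_num, Real.sqrt_sq (by norm_num : (0:ℝ) ≤ 2)]]
        exact Real.sqrt_le_sqrt hα4
      have ha : 0 < (1 - Real.sqrt α) ^ 2 := by nlinarith
      have hc : 0 ≤ ξ₀ / α := by positivity
      have h := (sandwich α (ξ₀ / α) hα hc ha).1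
      have hmax : max 0 (1 - 1/α) = 1 - 1/α := by
        rw [max_eq_right]; have : 1 / α ≤ 1 := by rw [div_le_one hα]; linarith
        linarith
      rw [hmax] at h; exact h
    · filter_upwards [eventually_ge_atTop (4 : ℝ)] with α hα4
      have hα : (0:ℝ) < α := by linarith
      have hs2 : (2:ℝ) ≤ Real.sqrt α := by
        rw [show (2:ℝ) = Real.sqrt 4 by
          rw [show (4:ℝ) = 2^2 by norm_num, Real.sqrt_sq (by norm_num : (0:ℝ) ≤ 2)]]
        exact Real.sqrt_le_sqrt hα4
      set s := Real.sqrt α with hsdef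
      have hss : s * s = α := Real.mul_self_sqrt hα.le
      have ha : 0 < (1 - s) ^ 2 := by nlinarith
      have hc : 0 ≤ ξ₀ / α := by positivity
      have h := (sandwich α (ξ₀ / α) hα hc ha).2
      have hmax : max 0 (1 - 1/α) = 1 - 1/α := by
        rw [max_eq_right]; have : 1 / α ≤ 1 := by rw [div_le_one hα]; linarith
        linarith
      rw [hmax] at h
      refine h.trans ?_
      have hπ : (0:ℝ) < π := pi_pos
      have h1 : ((1 + ξ₀ / α * (1 - s) ^ 2) ^ 2)⁻¹ ≤ 1 := by
        apply inv_le_one_of_one_le₀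
        nlinarith [mul_nonneg hc (le_of_lt ha)]
      have h2 : 4 / (π * (1 - s) ^ 2) ≤ 16 / π * (1 / α) := by
        rw [show (16:ℝ) / π * (1 / α) = 16 / (π * α) by field_simp]
        rw [div_le_div_iff₀ (by positivity) (by positivity)]
        nlinarith [mul_nonneg hπ.le (mul_nonneg (show (0:ℝ) ≤ 3*s-2 by linarith)
          (show (0:ℝ) ≤ s-2 by linarith))]
      have h3 : 4 / (π * (1 - s) ^ 2) * ((1 + ξ₀ / α * (1 - s) ^ 2) ^ 2)⁻¹ ≤
          4 / (π * (1 - s) ^ 2) := by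
        nlinarith [mul_le_mul_of_nonneg_left h1 (show (0:ℝ) ≤ 4 / (π * (1 - s) ^ 2) by positivity)]
      linarith
  · -- α → 0⁺
    have hup : Tendsto (fun α : ℝ => 256 / (π * ξ₀ ^ 2) * α ^ 2)
        (nhdsWithin 0 (Set.Ioi 0)) (nhds 0) := by
      have : Tendsto (fun α : ℝ => 256 / (π * ξ₀ ^ 2) * α ^ 2) (nhds 0)
          (nhds (256 / (π * ξ₀ ^ 2) * (0:ℝ) ^ 2)) :=
        (continuous_const.mul (continuous_pow 2)).tendsto 0
      simpa using this.mono_left nhdsWithin_le_nhds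
    apply tendsto_of_tendsto_of_tendsto_of_le_of_le' tendsto_const_nhds hup
    · filter_upwards [Ioo_mem_nhdsGT_of_mem
        (Set.mem_Ico.2 ⟨le_refl (0:ℝ), by norm_num⟩ : (0:ℝ) ∈ Set.Ico (0:ℝ) (1/4))] with α hαm
      obtain ⟨hα, hα4⟩ := hαm
      have hs : Real.sqrt α < 1/2 := by
        have hss : Real.sqrt α * Real.sqrt α = α := Real.mul_self_sqrt hα.le
        nlinarith [Real.sqrt_nonneg α, sq_nonneg (Real.sqrt α - 1/2)]
      have ha : 0 < (1 - Real.sqrt α) ^ 2 := by nlinarith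
      have hc : 0 ≤ ξ₀ / α := by positivity
      have h := (sandwich α (ξ₀ / α) hα hc ha).1
      exact le_trans (le_max_left _ _) h
    · filter_upwards [Ioo_mem_nhdsGT_of_mem
        (Set.mem_Ico.2 ⟨le_refl (0:ℝ), by norm_num⟩ : (0:ℝ) ∈ Set.Ico (0:ℝ) (1/4))] with α hαm
      obtain ⟨hα, hα4⟩ := hαm
      set s := Real.sqrt α with hsdef
      have hss : s * s = α := Real.mul_self_sqrt hα.le
      have hs0 : 0 ≤ s := Real.sqrt_nonneg α
      have hs : s < 1/2 := by nlinarith [sq_nonneg (s - 1/2)]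
      set a : ℝ := (1 - s) ^ 2 with hadef
      have ha4 : 1/4 < a := by
        rw [hadef]
        nlinarith [mul_pos (show (0:ℝ) < 1/2 - s by linarith) (show (0:ℝ) < 3/2 - s by linarith)]
      have ha : 0 < a := by linarith
      have hc : 0 ≤ ξ₀ / α := by positivity
      have h := (sandwich α (ξ₀ / α) hα hc ha).2
      have hmax : max 0 (1 - 1/α) = 0 := by
        rw [max_eq_left]
        have : 1 ≤ 1 / α := by rw [le_div_iff₀ hα]; linarith
        linarith
      rw [hmax, zero_add] at h
      refine h.trans ?_
      have hπ : (0:ℝ) < π := pi_pos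
      have hca : 0 < ξ₀ / α * a := by positivity
      have h1 : ((1 + ξ₀ / α * a) ^ 2)⁻¹ ≤ ((ξ₀ / α * a) ^ 2)⁻¹ := by
        apply inv_anti₀ (by positivity)
        nlinarith
      have h2 : ((ξ₀ / α * a) ^ 2)⁻¹ = α ^ 2 / (ξ₀ ^ 2 * a ^ 2) := by
        field_simp
      have h3 : 4 / (π * a) * (α ^ 2 / (ξ₀ ^ 2 * a ^ 2)) ≤ 256 / (π * ξ₀ ^ 2) * α ^ 2 := by
        have key : 4 / (π * a) * (α ^ 2 / (ξ₀ ^ 2 * a ^ 2)) = 4 * α ^ 2 / (π * ξ₀ ^ 2 * a ^ 3) := by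
          field_simp
        rw [key, div_le_iff₀ (by positivity)]
        have hcancel : 256 / (π * ξ₀ ^ 2) * α ^ 2 * (π * ξ₀ ^ 2 * a ^ 3) = 256 * α ^ 2 * a ^ 3 := by
          field_simp
        rw [hcancel]
        have ha3 : ((1:ℝ)/4) ^ 3 ≤ a ^ 3 := pow_le_pow_left₀ (by norm_num) ha4.le 3
        have hm := mul_le_mul_of_nonneg_left ha3 (show (0:ℝ) ≤ 256 * α ^ 2 by positivity)
        norm_num at hm
        linarith
      calc 4 / (π * a) * ((1 + ξ₀ / α * a) ^ 2)⁻¹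
          ≤ 4 / (π * a) * ((ξ₀ / α * a) ^ 2)⁻¹ :=
            mul_le_mul_of_nonneg_left h1 (by positivity)
        _ = 4 / (π * a) * (α ^ 2 / (ξ₀ ^ 2 * a ^ 2)) := by rw [h2]
        _ ≤ 256 / (π * ξ₀ ^ 2) * α ^ 2 := h3
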